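/- arXiv:2405.02531 — 3 statements merged into one kernel-verified Lean document; each statement's English description precedes it below -/
import Mathlib

section
/- Let d_G(r₁,r₂,θ₁−θ₂) = (r₁² + r₂² − 2 r₁ r₂ cos(θ₁−θ₂))^{1/2}, and suppose r₁, r₂ > 0 and d_G(r₁,r₂,θ₁−θ₂) > 0. Then the determinant of the 2×2 matrix with first row (∂²d_G/∂r₁∂θ₁, ∂²d_G/∂θ₁²) and second row (∂³d_G/∂r₁∂θ₁², ∂³d_G/∂θ₁³) equals r₁ r₂³ (r₁ cos(θ₁−θ₂) − r₂)³ / d_G⁶. -/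
open Real

noncomputable section

/-- Partial derivative in the angular variable `θ₁` of a function of `(r₁, θ₁)`. -/
def pdTheta (f : ℝ → ℝ → ℝ) : ℝ → ℝ → ℝ := fun r θ => deriv (fun t => f r t) θ

/-- Partial derivative in the radial variable `r₁` of a function of `(r₁, θ₁)`. -/
def pdR (f : ℝ → ℝ → ℝ) : ℝ → ℝ → ℝ := fun r θ => deriv (fun s => f s θ) r

/-- `d_G(r₁, r₂, θ₁ - θ₂)` as a function of `(r₁, θ₁)`, with `r₂, θ₂` held fixed. -/
def dGfun (r₂ θ₂ : ℝ) : ℝ → ℝ → ℝ :=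
  fun r₁ θ₁ => Real.sqrt (r₁ ^ 2 + r₂ ^ 2 - 2 * r₁ * r₂ * Real.cos (θ₁ - θ₂))

namespace Stmt6Aux

/-- The squared distance. -/
def Pf (r₂ θ₂ r θ : ℝ) : ℝ := r ^ 2 + r₂ ^ 2 - 2 * r * r₂ * Real.cos (θ - θ₂)

/-- `√(Pf)`. -/
def Sf (r₂ θ₂ r θ : ℝ) : ℝ := Real.sqrt (Pf r₂ θ₂ r θ)

lemma dG_eq (r₂ θ₂ r θ : ℝ) : dGfun r₂ θ₂ r θ = Sf r₂ θ₂ r θ := rfl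

/-- ∂θ d. -/
def F1 (r₂ θ₂ r θ : ℝ) : ℝ := r * r₂ * Real.sin (θ - θ₂) / Sf r₂ θ₂ r θ

/-- ∂θ² d. -/
def F2 (r₂ θ₂ r θ : ℝ) : ℝ :=
  (r * r₂ * Real.cos (θ - θ₂) * Sf r₂ θ₂ r θ ^ 2 - (r * r₂) ^ 2 * Real.sin (θ - θ₂) ^ 2) /
    Sf r₂ θ₂ r θ ^ 3

/-- ∂θ³ d. -/
def F3 (r₂ θ₂ r θ : ℝ) : ℝ :=
  -(r * r₂ * Real.sin (θ - θ₂)) *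
      (Sf r₂ θ₂ r θ ^ 4 +
        3 * (r * r₂ * Real.cos (θ - θ₂) * Sf r₂ θ₂ r θ ^ 2 -
          (r * r₂) ^ 2 * Real.sin (θ - θ₂) ^ 2)) /
    Sf r₂ θ₂ r θ ^ 5

/-- ∂r∂θ d. -/
def G1 (r₂ θ₂ r θ : ℝ) : ℝ :=
  (r₂ * Real.sin (θ - θ₂) * Sf r₂ θ₂ r θ ^ 2 -
      r * r₂ * Real.sin (θ - θ₂) * (r - r₂ * Real.cos (θ - θ₂))) / Sf r₂ θ₂ r θ ^ 3

/-- ∂r∂θ² d. -/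
def G2 (r₂ θ₂ r θ : ℝ) : ℝ :=
  ((r₂ * Real.cos (θ - θ₂) * Sf r₂ θ₂ r θ ^ 2 +
        r * r₂ * Real.cos (θ - θ₂) * (2 * r - 2 * r₂ * Real.cos (θ - θ₂)) -
        2 * r * r₂ ^ 2 * Real.sin (θ - θ₂) ^ 2) * Sf r₂ θ₂ r θ ^ 2 -
      3 * (r * r₂ * Real.cos (θ - θ₂) * Sf r₂ θ₂ r θ ^ 2 -
        (r * r₂) ^ 2 * Real.sin (θ - θ₂) ^ 2) * (r - r₂ * Real.cos (θ - θ₂))) /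
    Sf r₂ θ₂ r θ ^ 5

variable {r₂ θ₂ r θ : ℝ}

lemma S_pos (h : 0 < Pf r₂ θ₂ r θ) : 0 < Sf r₂ θ₂ r θ := Real.sqrt_pos.mpr h

lemma S_ne (h : 0 < Pf r₂ θ₂ r θ) : Sf r₂ θ₂ r θ ≠ 0 := (S_pos h).ne'

lemma S_sq (h : 0 < Pf r₂ θ₂ r θ) : Sf r₂ θ₂ r θ ^ 2 = Pf r₂ θ₂ r θ :=
  Real.sq_sqrt h.le

lemma hasDerivAt_sin' (θ₂ θ : ℝ) :
    HasDerivAt (fun t => Real.sin (t - θ₂)) (Real.cos (θ - θ₂)) θ := by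
  simpa [Function.comp_def] using (Real.hasDerivAt_sin (θ - θ₂)).comp θ ((hasDerivAt_id θ).sub_const θ₂)

lemma hasDerivAt_cos' (θ₂ θ : ℝ) :
    HasDerivAt (fun t => Real.cos (t - θ₂)) (-Real.sin (θ - θ₂)) θ := by
  simpa [Function.comp_def] using (Real.hasDerivAt_cos (θ - θ₂)).comp θ ((hasDerivAt_id θ).sub_const θ₂)

lemma hasDerivAt_Pθ (r₂ θ₂ r θ : ℝ) :
    HasDerivAt (fun t => Pf r₂ θ₂ r t) (2 * r * r₂ * Real.sin (θ - θ₂)) θ := by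
  have h := ((hasDerivAt_cos' θ₂ θ).const_mul (2 * r * r₂)).const_sub (r ^ 2 + r₂ ^ 2)
  have h2 : HasDerivAt (fun t => Pf r₂ θ₂ r t)
      (-(2 * r * r₂ * -Real.sin (θ - θ₂))) θ := by
    refine h.congr_of_eventuallyEq (Filter.Eventually.of_forall fun t => ?_)
    simp only [Pf]
  simpa using h2.congr_deriv (by ring)

lemma hasDerivAt_Pr (r₂ θ₂ r θ : ℝ) :
    HasDerivAt (fun x => Pf r₂ θ₂ x θ) (2 * r - 2 * r₂ * Real.cos (θ - θ₂)) r := by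
  have h1 : HasDerivAt (fun x : ℝ => x ^ 2) (2 * r) r := by
    simpa using hasDerivAt_pow 2 r
  have h2 : HasDerivAt (fun x : ℝ => x * (2 * r₂ * Real.cos (θ - θ₂)))
      (2 * r₂ * Real.cos (θ - θ₂)) r := hasDerivAt_mul_const _
  have h := (h1.add_const (r₂ ^ 2)).sub h2
  refine (h.congr_of_eventuallyEq (Filter.Eventually.of_forall fun x => ?_)).congr_deriv rfl
  simp only [Pf, Pi.sub_apply]; ring

lemma hasDerivAt_Sθ (h : 0 < Pf r₂ θ₂ r θ) :
    HasDerivAt (fun t => Sf r₂ θ₂ r t)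
      (r * r₂ * Real.sin (θ - θ₂) / Sf r₂ θ₂ r θ) θ := by
  have := (hasDerivAt_Pθ r₂ θ₂ r θ).sqrt h.ne'
  refine this.congr_deriv ?_
  rw [show Real.sqrt (Pf r₂ θ₂ r θ) = Sf r₂ θ₂ r θ from rfl]
  have hS0 := S_ne h
  field_simp

lemma hasDerivAt_Sr (h : 0 < Pf r₂ θ₂ r θ) :
    HasDerivAt (fun x => Sf r₂ θ₂ x θ)
      ((r - r₂ * Real.cos (θ - θ₂)) / Sf r₂ θ₂ r θ) r := by
  have := (hasDerivAt_Pr r₂ θ₂ r θ).sqrt h.ne'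
  refine this.congr_deriv ?_
  rw [show Real.sqrt (Pf r₂ θ₂ r θ) = Sf r₂ θ₂ r θ from rfl]
  have hS0 := S_ne h
  field_simp

lemma hasDerivAt_F1θ (h : 0 < Pf r₂ θ₂ r θ) :
    HasDerivAt (fun t => F1 r₂ θ₂ r t) (F2 r₂ θ₂ r θ) θ := by
  have hnum : HasDerivAt (fun t => r * r₂ * Real.sin (t - θ₂))
      (r * r₂ * Real.cos (θ - θ₂)) θ := by
    simpa [mul_assoc] using (hasDerivAt_sin' θ₂ θ).const_mul (r * r₂)
  have hdiv := hnum.div (hasDerivAt_Sθ h) (S_ne h)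
  refine hdiv.congr_deriv ?_
  unfold F2
  have hS0 := S_ne h
  field_simp

lemma hasDerivAt_F1r (h : 0 < Pf r₂ θ₂ r θ) :
    HasDerivAt (fun x => F1 r₂ θ₂ x θ) (G1 r₂ θ₂ r θ) r := by
  have hnum : HasDerivAt (fun x : ℝ => x * r₂ * Real.sin (θ - θ₂))
      (r₂ * Real.sin (θ - θ₂)) r := by
    have := hasDerivAt_mul_const (c := r₂ * Real.sin (θ - θ₂)) (x := r)
    refine (this.congr_of_eventuallyEq (Filter.Eventually.of_forall fun x => ?_)).congr_deriv rfl
    ring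
  have hdiv := hnum.div (hasDerivAt_Sr h) (S_ne h)
  refine hdiv.congr_deriv ?_
  unfold G1
  have hS0 := S_ne h
  field_simp

lemma hasDerivAt_F2θ (h : 0 < Pf r₂ θ₂ r θ) :
    HasDerivAt (fun t => F2 r₂ θ₂ r t) (F3 r₂ θ₂ r θ) θ := by
  have hS := hasDerivAt_Sθ h
  have hA : HasDerivAt (fun t => r * r₂ * Real.cos (t - θ₂) * Sf r₂ θ₂ r t ^ 2)
      ((r * r₂ * -Real.sin (θ - θ₂)) * Sf r₂ θ₂ r θ ^ 2 +
        r * r₂ * Real.cos (θ - θ₂) *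
          (2 * Sf r₂ θ₂ r θ ^ 1 * (r * r₂ * Real.sin (θ - θ₂) / Sf r₂ θ₂ r θ))) θ := by
    have hc : HasDerivAt (fun t => r * r₂ * Real.cos (t - θ₂))
        (r * r₂ * -Real.sin (θ - θ₂)) θ := by
      simpa [mul_assoc] using (hasDerivAt_cos' θ₂ θ).const_mul (r * r₂)
    exact hc.mul (hS.pow 2)
  have hB : HasDerivAt (fun t => (r * r₂) ^ 2 * Real.sin (t - θ₂) ^ 2)
      ((r * r₂) ^ 2 * (2 * Real.sin (θ - θ₂) ^ 1 * Real.cos (θ - θ₂))) θ :=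
    ((hasDerivAt_sin' θ₂ θ).pow 2).const_mul _
  have hdiv := (hA.sub hB).div (hS.pow 3) (pow_ne_zero 3 (S_ne h))
  refine hdiv.congr_deriv ?_
  unfold F3
  have hS0 := S_ne h
  simp only [Pi.pow_apply, Pi.sub_apply]
  field_simp
  ring

lemma hasDerivAt_F2r (h : 0 < Pf r₂ θ₂ r θ) :
    HasDerivAt (fun x => F2 r₂ θ₂ x θ) (G2 r₂ θ₂ r θ) r := by
  have hS := hasDerivAt_Sr h
  have hA : HasDerivAt (fun x => x * r₂ * Real.cos (θ - θ₂) * Sf r₂ θ₂ x θ ^ 2)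
      ((r₂ * Real.cos (θ - θ₂)) * Sf r₂ θ₂ r θ ^ 2 +
        r * r₂ * Real.cos (θ - θ₂) *
          (2 * Sf r₂ θ₂ r θ ^ 1 * ((r - r₂ * Real.cos (θ - θ₂)) / Sf r₂ θ₂ r θ))) r := by
    have hc : HasDerivAt (fun x : ℝ => x * r₂ * Real.cos (θ - θ₂))
        (r₂ * Real.cos (θ - θ₂)) r := by
      have := hasDerivAt_mul_const (c := r₂ * Real.cos (θ - θ₂)) (x := r)
      refine (this.congr_of_eventuallyEq (Filter.Eventually.of_forall fun x => ?_)).congr_deriv rfl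
      ring
    have := hc.mul (hS.pow 2)
    refine this.congr_deriv ?_
    simp only [Pi.pow_apply]
    ring
  have hB : HasDerivAt (fun x => (x * r₂) ^ 2 * Real.sin (θ - θ₂) ^ 2)
      ((2 * (r * r₂) ^ 1 * r₂) * Real.sin (θ - θ₂) ^ 2) r := by
    have h1 : HasDerivAt (fun x : ℝ => x * r₂) r₂ r := hasDerivAt_mul_const r₂
    exact (h1.pow 2).mul_const _
  have hdiv := (hA.sub hB).div (hS.pow 3) (pow_ne_zero 3 (S_ne h))
  refine hdiv.congr_deriv ?_
  unfold G2
  have hS0 := S_ne h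
  simp only [Pi.pow_apply, Pi.sub_apply]
  field_simp
  ring

lemma evP_θ (h : 0 < Pf r₂ θ₂ r θ) : ∀ᶠ t in nhds θ, 0 < Pf r₂ θ₂ r t := by
  have hc : Continuous fun t => Pf r₂ θ₂ r t := by unfold Pf; fun_prop
  exact hc.continuousAt.eventually (eventually_gt_nhds h)

lemma evP_r (h : 0 < Pf r₂ θ₂ r θ) : ∀ᶠ x in nhds r, 0 < Pf r₂ θ₂ x θ := by
  have hc : Continuous fun x => Pf r₂ θ₂ x θ := by unfold Pf; fun_prop
  exact hc.continuousAt.eventually (eventually_gt_nhds h)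

lemma pdT1 (h : 0 < Pf r₂ θ₂ r θ) : pdTheta (dGfun r₂ θ₂) r θ = F1 r₂ θ₂ r θ :=
  (hasDerivAt_Sθ h).deriv

lemma pdT2 (h : 0 < Pf r₂ θ₂ r θ) :
    pdTheta (pdTheta (dGfun r₂ θ₂)) r θ = F2 r₂ θ₂ r θ := by
  have hev : (fun t => pdTheta (dGfun r₂ θ₂) r t) =ᶠ[nhds θ] fun t => F1 r₂ θ₂ r t :=
    (evP_θ h).mono fun t ht => pdT1 ht
  show deriv _ θ = _
  rw [hev.deriv_eq]
  exact (hasDerivAt_F1θ h).deriv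

lemma pdT3 (h : 0 < Pf r₂ θ₂ r θ) :
    pdTheta (pdTheta (pdTheta (dGfun r₂ θ₂))) r θ = F3 r₂ θ₂ r θ := by
  have hev : (fun t => pdTheta (pdTheta (dGfun r₂ θ₂)) r t) =ᶠ[nhds θ]
      fun t => F2 r₂ θ₂ r t := (evP_θ h).mono fun t ht => pdT2 ht
  show deriv _ θ = _
  rw [hev.deriv_eq]
  exact (hasDerivAt_F2θ h).deriv

lemma pdR1 (h : 0 < Pf r₂ θ₂ r θ) :
    pdR (pdTheta (dGfun r₂ θ₂)) r θ = G1 r₂ θ₂ r θ := by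
  have hev : (fun x => pdTheta (dGfun r₂ θ₂) x θ) =ᶠ[nhds r] fun x => F1 r₂ θ₂ x θ :=
    (evP_r h).mono fun x hx => pdT1 hx
  show deriv _ r = _
  rw [hev.deriv_eq]
  exact (hasDerivAt_F1r h).deriv

lemma pdR2 (h : 0 < Pf r₂ θ₂ r θ) :
    pdR (pdTheta (pdTheta (dGfun r₂ θ₂))) r θ = G2 r₂ θ₂ r θ := by
  have hev : (fun x => pdTheta (pdTheta (dGfun r₂ θ₂)) x θ) =ᶠ[nhds r]
      fun x => F2 r₂ θ₂ x θ := (evP_r h).mono fun x hx => pdT2 hx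
  show deriv _ r = _
  rw [hev.deriv_eq]
  exact (hasDerivAt_F2r h).deriv

end Stmt6Aux

open Stmt6Aux in
theorem stmt6 (r₁ r₂ θ₁ θ₂ : ℝ) (hr₁ : 0 < r₁) (hr₂ : 0 < r₂)
    (hd : 0 < dGfun r₂ θ₂ r₁ θ₁) :
    pdR (pdTheta (dGfun r₂ θ₂)) r₁ θ₁ * pdTheta (pdTheta (pdTheta (dGfun r₂ θ₂))) r₁ θ₁ -
      pdTheta (pdTheta (dGfun r₂ θ₂)) r₁ θ₁ * pdR (pdTheta (pdTheta (dGfun r₂ θ₂))) r₁ θ₁ =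
      r₁ * r₂ ^ 3 * (r₁ * Real.cos (θ₁ - θ₂) - r₂) ^ 3 / (dGfun r₂ θ₂ r₁ θ₁) ^ 6 := by
  have hP : 0 < Pf r₂ θ₂ r₁ θ₁ := by
    have := hd
    rw [dG_eq] at this
    exact Real.sqrt_pos.mp this
  rw [pdR1 hP, pdT3 hP, pdT2 hP, pdR2 hP, dG_eq]
  unfold F2 F3 G1 G2
  set S := Sf r₂ θ₂ r₁ θ₁ with hS
  set c := Real.cos (θ₁ - θ₂) with hc
  set s := Real.sin (θ₁ - θ₂) with hs
  have hS0 : S ≠ 0 := S_ne hP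
  have hS2 : S ^ 2 = r₁ ^ 2 + r₂ ^ 2 - 2 * r₁ * r₂ * c := S_sq hP
  have hs2 : s ^ 2 = 1 - c ^ 2 := Real.sin_sq (θ₁ - θ₂)
  field_simp
  rw [hs2, show S ^ 4 = (S ^ 2) ^ 2 by ring, hS2]
  ring

end
end

section
/- Let α ∈ (−1,1)∖{0}. Then there exists a constant C, depending only on α, such that for every φ ∈ ℝ: ∫₀^∞ |(e^{−s} − cos φ) sinh(αs)| / (cosh s − cos φ) ds ≤ C and ∫₀^∞ |sin φ · cosh(αs)| / (cosh s − cos φ) ds ≤ C. -/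
open MeasureTheory Real Set
open scoped ENNReal

lemma aux_cosh_lower {s : ℝ} (hs : 0 ≤ s) : 1 + s ^ 2 / 2 ≤ Real.cosh s := by
  have h : Real.cosh s = 2 * Real.sinh (s / 2) ^ 2 + 1 := by
    have := Real.cosh_two_mul (s / 2)
    have h2 : 2 * (s / 2) = s := by ring
    rw [h2] at this
    rw [this, Real.cosh_sq]; ring
  have hsinh : s / 2 ≤ Real.sinh (s / 2) := Real.self_le_sinh_iff.2 (by linarith)
  nlinarith [hsinh, hs]

lemma aux_sinh_le {x : ℝ} (hx : 0 ≤ x) : Real.sinh x ≤ x * Real.exp x := by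
  rw [Real.sinh_eq]
  have h1 : (-(2 * x)) + 1 ≤ Real.exp (-(2 * x)) := Real.add_one_le_exp _
  have h2 : Real.exp (-x) = Real.exp x * Real.exp (-(2*x)) := by
    rw [← Real.exp_add]; ring_nf
  have h3 : (0:ℝ) < Real.exp x := Real.exp_pos _
  nlinarith

lemma aux_sinh_le_exp {x : ℝ} : Real.sinh x ≤ Real.exp x / 2 := by
  rw [Real.sinh_eq]
  have := Real.exp_pos (-x)
  linarith

lemma aux_cosh_le_exp {x : ℝ} (hx : 0 ≤ x) : Real.cosh x ≤ Real.exp x := by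
  rw [Real.cosh_eq]
  have h : Real.exp (-x) ≤ Real.exp x := Real.exp_le_exp.2 (by linarith)
  linarith [Real.exp_pos (-x)]

lemma point1_small {α c s : ℝ} (hα : |α| ≤ 1) (hc : |c| ≤ 1) (hs : 0 < s) (hs1 : s ≤ 1) :
    |(Real.exp (-s) - c) * Real.sinh (α * s)| / (Real.cosh s - c) ≤ 3 * Real.exp 1 := by
  obtain ⟨hcl, hcu⟩ := abs_le.1 hc
  set t := 1 - c with ht
  have ht0 : 0 ≤ t := by linarith
  have hD : s ^ 2 / 2 + t ≤ Real.cosh s - c := by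
    have := aux_cosh_lower hs.le; linarith
  have hDpos : 0 < Real.cosh s - c := by nlinarith
  have he1 : Real.exp (-s) ≤ 1 := Real.exp_le_one_iff.2 (by linarith)
  have he2 : 1 - s ≤ Real.exp (-s) := by
    have := Real.add_one_le_exp (-s); linarith
  have hnum1 : |Real.exp (-s) - c| ≤ s + t :=
    abs_le.2 ⟨by linarith, by linarith⟩
  have hnum2 : |Real.sinh (α * s)| ≤ s * Real.exp 1 := by
    rw [Real.abs_sinh]
    have habs : |α * s| ≤ s := by
      rw [abs_mul, abs_of_pos hs]
      nlinarith [abs_nonneg α]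
    have h1 : Real.sinh |α * s| ≤ Real.sinh s := Real.sinh_le_sinh.2 habs
    have h2 : Real.sinh s ≤ s * Real.exp s := aux_sinh_le hs.le
    have h3 : Real.exp s ≤ Real.exp 1 := Real.exp_le_exp.2 hs1
    nlinarith
  rw [div_le_iff₀ hDpos, abs_mul]
  have e1 : (0:ℝ) < Real.exp 1 := Real.exp_pos 1
  have hmul : |Real.exp (-s) - c| * |Real.sinh (α * s)| ≤ (s + t) * (s * Real.exp 1) :=
    mul_le_mul hnum1 hnum2 (abs_nonneg _) (by linarith)
  have step : (s + t) * (s * Real.exp 1) ≤ 3 * Real.exp 1 * (s ^ 2 / 2 + t) := by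
    nlinarith [mul_nonneg e1.le (sub_nonneg.2 (mul_le_of_le_one_right ht0 hs1)),
      mul_nonneg e1.le (sq_nonneg s), mul_nonneg e1.le ht0]
  have step2 : 3 * Real.exp 1 * (s ^ 2 / 2 + t) ≤ 3 * Real.exp 1 * (Real.cosh s - c) :=
    mul_le_mul_of_nonneg_left hD (by positivity)
  exact le_trans hmul (le_trans step step2)

lemma point_tail {a c s N : ℝ} (ha : a < 1) (hc : |c| ≤ 1) (hs : 1 ≤ s)
    (hN : N ≤ Real.exp (a * s)) (hN0 : 0 ≤ N) :
    N / (Real.cosh s - c) ≤ 8 * Real.exp (-((1 - a) * s)) := by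
  obtain ⟨hcl, hcu⟩ := abs_le.1 hc
  have hexp : Real.exp 1 ≤ Real.exp s := Real.exp_le_exp.2 hs
  have he : (2.7182818283 : ℝ) < Real.exp 1 := Real.exp_one_gt_d9
  have hD : Real.exp s / 8 ≤ Real.cosh s - c := by
    rw [Real.cosh_eq]
    have := Real.exp_pos (-s)
    nlinarith
  have hDpos : 0 < Real.cosh s - c := lt_of_lt_of_le (by positivity) hD
  rw [div_le_iff₀ hDpos]
  have key : Real.exp (a * s) = Real.exp (-((1 - a) * s)) * Real.exp s := by
    rw [← Real.exp_add]; ring_nf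
  have hb := Real.exp_pos (-((1 - a) * s))
  calc N ≤ Real.exp (a * s) := hN
    _ = Real.exp (-((1 - a) * s)) * Real.exp s := key
    _ ≤ 8 * Real.exp (-((1 - a) * s)) * (Real.cosh s - c) := by nlinarith

lemma point2_small {α φ s : ℝ} (hα : |α| ≤ 1) (hs : 0 < s) (hs1 : s ≤ 1) :
    |Real.sin φ * Real.cosh (α * s)| / (Real.cosh s - Real.cos φ) ≤
      (4 * Real.sqrt 2 * Real.exp 1) *
        (Real.sqrt (1 - Real.cos φ) / (s + Real.sqrt (1 - Real.cos φ)) ^ 2) := by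
  set c := Real.cos φ with hcdef
  have hcl : -1 ≤ c := Real.neg_one_le_cos φ
  have hcu : c ≤ 1 := Real.cos_le_one φ
  set t := 1 - c with ht
  have ht0 : 0 ≤ t := by linarith
  set b := Real.sqrt t with hbdef
  have hb0 : 0 ≤ b := Real.sqrt_nonneg t
  have hb2 : b ^ 2 = t := Real.sq_sqrt ht0
  have hsin : |Real.sin φ| ≤ Real.sqrt 2 * b := by
    have hsq : Real.sin φ ^ 2 ≤ 2 * t := by
      have := Real.sin_sq_add_cos_sq φ
      nlinarith
    calc |Real.sin φ| ≤ Real.sqrt (2 * t) := Real.abs_le_sqrt hsq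
      _ = Real.sqrt 2 * b := Real.sqrt_mul (by norm_num) t
  have hcosh : Real.cosh (α * s) ≤ Real.exp 1 := by
    have h1 : Real.cosh (α * s) ≤ Real.cosh 1 := by
      apply Real.cosh_le_cosh.2
      rw [abs_mul, abs_of_pos hs, abs_one]
      nlinarith [abs_nonneg α]
    have h2 : Real.cosh 1 ≤ Real.exp 1 := aux_cosh_le_exp zero_le_one
    linarith
  have hD : (s + b) ^ 2 / 4 ≤ Real.cosh s - c := by
    have h1 := aux_cosh_lower hs.le
    nlinarith [sq_nonneg (s - b)]
  have hDpos : 0 < Real.cosh s - c := by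
    have : (0:ℝ) < (s + b) ^ 2 / 4 := by positivity
    linarith
  have hsb : (0:ℝ) < (s + b) ^ 2 := by positivity
  rw [div_le_iff₀ hDpos, abs_mul, abs_of_pos (Real.cosh_pos (α * s))]
  have e1 : (0:ℝ) < Real.exp 1 := Real.exp_pos 1
  have s2 : (0:ℝ) ≤ Real.sqrt 2 := Real.sqrt_nonneg 2
  have hmul : |Real.sin φ| * Real.cosh (α * s) ≤ (Real.sqrt 2 * b) * Real.exp 1 :=
    mul_le_mul hsin hcosh (Real.cosh_pos _).le (by positivity)
  have hrhs : (4 * Real.sqrt 2 * Real.exp 1) * (b / (s + b) ^ 2) * ((s + b) ^ 2 / 4)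
      = Real.sqrt 2 * b * Real.exp 1 := by
    field_simp
  calc |Real.sin φ| * Real.cosh (α * s) ≤ Real.sqrt 2 * b * Real.exp 1 := hmul
    _ = (4 * Real.sqrt 2 * Real.exp 1) * (b / (s + b) ^ 2) * ((s + b) ^ 2 / 4) := hrhs.symm
    _ ≤ (4 * Real.sqrt 2 * Real.exp 1) * (b / (s + b) ^ 2) * (Real.cosh s - c) := by
        apply mul_le_mul_of_nonneg_left hD
        positivity
lemma tail_bound {β : ℝ} (hβ : 0 < β) :
    ∫⁻ s in Set.Ioi (1:ℝ), ENNReal.ofReal (8 * Real.exp (-(β * s))) ≤ ENNReal.ofReal (8 / β) := by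
  have hderiv : ∀ x ∈ Set.Ioi (1:ℝ),
      HasDerivAt (fun s : ℝ => -(8 / β) * Real.exp (-(β * s))) (8 * Real.exp (-(β * x))) x := by
    intro x _
    have h : HasDerivAt (fun s : ℝ => -(β * s)) (-β) x := by
      exact ((hasDerivAt_id x).const_mul β).neg.congr_deriv (by simp)
    have := (h.exp).const_mul (-(8 / β))
    refine this.congr_deriv ?_
    field_simp
  have hpos : ∀ x ∈ Set.Ioi (1:ℝ), 0 ≤ 8 * Real.exp (-(β * x)) := fun x _ => by positivity
  have htend : Filter.Tendsto (fun s : ℝ => -(8 / β) * Real.exp (-(β * s))) Filter.atTop (nhds 0) := by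
    have h1 : Filter.Tendsto (fun s : ℝ => β * s) Filter.atTop Filter.atTop :=
      Filter.Tendsto.const_mul_atTop hβ Filter.tendsto_id
    have h2 := Real.tendsto_exp_neg_atTop_nhds_zero.comp h1
    simpa [Function.comp] using h2.const_mul (-(8 / β))
  have hcont : ContinuousWithinAt (fun s : ℝ => -(8 / β) * Real.exp (-(β * s))) (Set.Ici 1) 1 :=
    (by fun_prop : Continuous fun s : ℝ => -(8 / β) * Real.exp (-(β * s))).continuousWithinAt
  have hint := integrableOn_Ioi_deriv_of_nonneg hcont hderiv hpos htend
  have heq := integral_Ioi_of_hasDerivAt_of_nonneg hcont hderiv hpos htend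
  rw [← ofReal_integral_eq_lintegral_ofReal hint
    (Filter.Eventually.of_forall fun x => by positivity)]
  apply ENNReal.ofReal_le_ofReal
  rw [heq]
  have : Real.exp (-(β * 1)) ≤ 1 := Real.exp_le_one_iff.2 (by nlinarith)
  rw [div_eq_mul_inv]
  nlinarith [inv_pos.2 hβ, mul_le_mul_of_nonneg_left this (le_of_lt (by positivity : (0:ℝ) < 8/β))]

lemma peak_bound {b : ℝ} (hb : 0 < b) :
    ∫⁻ s in Set.Ioi (0:ℝ), ENNReal.ofReal (b / (s + b) ^ 2) ≤ ENNReal.ofReal 1 := by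
  have hderiv : ∀ x ∈ Set.Ioi (0:ℝ),
      HasDerivAt (fun s : ℝ => -(b / (s + b))) (b / (x + b) ^ 2) x := by
    intro x hx
    have hxb : x + b ≠ 0 := by simp only [Set.mem_Ioi] at hx; positivity
    have h : HasDerivAt (fun s : ℝ => s + b) 1 x := (hasDerivAt_id x).add_const b
    have := ((h.inv hxb).const_mul b).neg
    refine this.congr_deriv ?_
    field_simp
  have hpos : ∀ x ∈ Set.Ioi (0:ℝ), 0 ≤ b / (x + b) ^ 2 := fun x hx => by
    simp only [Set.mem_Ioi] at hx; positivity
  have htend : Filter.Tendsto (fun s : ℝ => -(b / (s + b))) Filter.atTop (nhds 0) := by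
    have h1 : Filter.Tendsto (fun s : ℝ => s + b) Filter.atTop Filter.atTop :=
      Filter.tendsto_atTop_add_const_right _ b Filter.tendsto_id
    have h2 : Filter.Tendsto (fun s : ℝ => b / (s + b)) Filter.atTop (nhds 0) := by
      simpa [div_eq_mul_inv] using (h1.inv_tendsto_atTop).const_mul b
    simpa using h2.neg
  have hcont : ContinuousWithinAt (fun s : ℝ => -(b / (s + b))) (Set.Ici 0) 0 := by
    apply ContinuousAt.continuousWithinAt
    have : (0:ℝ) + b ≠ 0 := by positivity
    fun_prop (disch := assumption)
  have hint := integrableOn_Ioi_deriv_of_nonneg hcont hderiv hpos htend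
  have heq := integral_Ioi_of_hasDerivAt_of_nonneg hcont hderiv hpos htend
  rw [← ofReal_integral_eq_lintegral_ofReal hint
    (Filter.Eventually.of_forall fun x => by positivity)]
  apply ENNReal.ofReal_le_ofReal
  rw [heq]
  have : b / (0 + b) = 1 := by simp [hb.ne']
  rw [this]; norm_num

theorem stmt17 (α : ℝ) (hα : α ∈ Set.Ioo (-1 : ℝ) 1) (hα0 : α ≠ 0) :
    ∃ C : ℝ, ∀ φ : ℝ,
      (∫⁻ s in Set.Ioi (0 : ℝ),
          ENNReal.ofReal (|(Real.exp (-s) - Real.cos φ) * Real.sinh (α * s)| /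
            (Real.cosh s - Real.cos φ)) ≤ ENNReal.ofReal C) ∧
      (∫⁻ s in Set.Ioi (0 : ℝ),
          ENNReal.ofReal (|Real.sin φ * Real.cosh (α * s)| /
            (Real.cosh s - Real.cos φ)) ≤ ENNReal.ofReal C) := by
  obtain ⟨hα1, hα2⟩ := hα
  set a := |α| with hadef
  have ha1 : a < 1 := abs_lt.2 ⟨hα1, hα2⟩
  have ha0 : 0 ≤ a := abs_nonneg α
  set β := 1 - a with hβdef
  have hβ : 0 < β := by simp only [hβdef]; linarith
  refine ⟨9 * Real.exp 1 + 8 / β, fun φ => ?_⟩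
  have e1 : (0:ℝ) < Real.exp 1 := Real.exp_pos 1
  have hβnn : 0 ≤ 8 / β := by positivity
  have hcabs : |Real.cos φ| ≤ 1 := Real.abs_cos_le_one φ
  have hsplit : Set.Ioi (0:ℝ) = Set.Ioc 0 1 ∪ Set.Ioi 1 :=
    (Set.Ioc_union_Ioi_eq_Ioi zero_le_one).symm
  -- tail pointwise bounds
  have htail1 : ∀ s ∈ Set.Ioi (1:ℝ),
      ENNReal.ofReal (|(Real.exp (-s) - Real.cos φ) * Real.sinh (α * s)| /
        (Real.cosh s - Real.cos φ)) ≤ ENNReal.ofReal (8 * Real.exp (-(β * s))) := by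
    intro s hs
    simp only [Set.mem_Ioi] at hs
    apply ENNReal.ofReal_le_ofReal
    have hN : |(Real.exp (-s) - Real.cos φ) * Real.sinh (α * s)| ≤ Real.exp (a * s) := by
      rw [abs_mul]
      have h1 : |Real.exp (-s) - Real.cos φ| ≤ 2 := by
        have := Real.exp_pos (-s)
        have h2 : Real.exp (-s) ≤ 1 := Real.exp_le_one_iff.2 (by linarith)
        have := abs_le.1 hcabs
        apply abs_le.2; constructor <;> linarith
      have h2 : |Real.sinh (α * s)| ≤ Real.exp (a * s) / 2 := by
        rw [Real.abs_sinh]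
        have : |α * s| = a * s := by rw [abs_mul, abs_of_pos (by linarith : (0:ℝ) < s)]
        rw [this]
        exact aux_sinh_le_exp
      calc |Real.exp (-s) - Real.cos φ| * |Real.sinh (α * s)|
          ≤ 2 * (Real.exp (a * s) / 2) :=
            mul_le_mul h1 h2 (abs_nonneg _) (by norm_num)
        _ = Real.exp (a * s) := by ring
    have := point_tail ha1 hcabs hs.le hN (abs_nonneg _)
    simpa [hβdef] using this
  have htail2 : ∀ s ∈ Set.Ioi (1:ℝ),
      ENNReal.ofReal (|Real.sin φ * Real.cosh (α * s)| /
        (Real.cosh s - Real.cos φ)) ≤ ENNReal.ofReal (8 * Real.exp (-(β * s))) := by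
    intro s hs
    simp only [Set.mem_Ioi] at hs
    apply ENNReal.ofReal_le_ofReal
    have hN : |Real.sin φ * Real.cosh (α * s)| ≤ Real.exp (a * s) := by
      rw [abs_mul, abs_of_pos (Real.cosh_pos (α * s))]
      have h1 : |Real.sin φ| ≤ 1 := Real.abs_sin_le_one φ
      have h2 : Real.cosh (α * s) ≤ Real.exp (a * s) := by
        rw [← Real.cosh_abs]
        have : |α * s| = a * s := by rw [abs_mul, abs_of_pos (by linarith : (0:ℝ) < s)]
        rw [this]
        exact aux_cosh_le_exp (by positivity)
      calc |Real.sin φ| * Real.cosh (α * s) ≤ 1 * Real.exp (a * s) :=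
            mul_le_mul h1 h2 (Real.cosh_pos _).le zero_le_one
        _ = Real.exp (a * s) := one_mul _
    have := point_tail ha1 hcabs hs.le hN (abs_nonneg _)
    simpa [hβdef] using this
  have hmeas_tail : Measurable fun s : ℝ => ENNReal.ofReal (8 * Real.exp (-(β * s))) := by
    fun_prop
  have htailint1 : (∫⁻ s in Set.Ioi (1:ℝ),
      ENNReal.ofReal (|(Real.exp (-s) - Real.cos φ) * Real.sinh (α * s)| /
        (Real.cosh s - Real.cos φ))) ≤ ENNReal.ofReal (8 / β) :=
    le_trans (setLIntegral_mono hmeas_tail htail1) (tail_bound hβ)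
  have htailint2 : (∫⁻ s in Set.Ioi (1:ℝ),
      ENNReal.ofReal (|Real.sin φ * Real.cosh (α * s)| /
        (Real.cosh s - Real.cos φ))) ≤ ENNReal.ofReal (8 / β) :=
    le_trans (setLIntegral_mono hmeas_tail htail2) (tail_bound hβ)
  constructor
  · -- first integral
    rw [hsplit, lintegral_union measurableSet_Ioi Set.Ioc_disjoint_Ioi_same]
    have hsmall : (∫⁻ s in Set.Ioc (0:ℝ) 1,
        ENNReal.ofReal (|(Real.exp (-s) - Real.cos φ) * Real.sinh (α * s)| /
          (Real.cosh s - Real.cos φ))) ≤ ENNReal.ofReal (3 * Real.exp 1) := by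
      have hmono : ∀ s ∈ Set.Ioc (0:ℝ) 1,
          ENNReal.ofReal (|(Real.exp (-s) - Real.cos φ) * Real.sinh (α * s)| /
            (Real.cosh s - Real.cos φ)) ≤ ENNReal.ofReal (3 * Real.exp 1) := by
        intro s hs
        obtain ⟨hs0, hs1⟩ := hs
        exact ENNReal.ofReal_le_ofReal (point1_small ha1.le hcabs hs0 hs1)
      calc (∫⁻ s in Set.Ioc (0:ℝ) 1,
            ENNReal.ofReal (|(Real.exp (-s) - Real.cos φ) * Real.sinh (α * s)| /
              (Real.cosh s - Real.cos φ)))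
          ≤ ∫⁻ _ in Set.Ioc (0:ℝ) 1, ENNReal.ofReal (3 * Real.exp 1) :=
            setLIntegral_mono measurable_const hmono
        _ = ENNReal.ofReal (3 * Real.exp 1) * volume (Set.Ioc (0:ℝ) 1) :=
            setLIntegral_const _ _
        _ = ENNReal.ofReal (3 * Real.exp 1) := by
            rw [Real.volume_Ioc]; norm_num
    calc _ ≤ ENNReal.ofReal (3 * Real.exp 1) + ENNReal.ofReal (8 / β) :=
          add_le_add hsmall htailint1
      _ = ENNReal.ofReal (3 * Real.exp 1 + 8 / β) :=
          (ENNReal.ofReal_add (by positivity) hβnn).symm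
      _ ≤ ENNReal.ofReal (9 * Real.exp 1 + 8 / β) :=
          ENNReal.ofReal_le_ofReal (by linarith)
  · -- second integral
    by_cases hsφ : Real.sin φ = 0
    · simp only [hsφ, zero_mul, abs_zero, zero_div, ENNReal.ofReal_zero, lintegral_zero]
      exact zero_le
    · have ht : 0 < 1 - Real.cos φ := by
        rcases lt_or_eq_of_le (Real.cos_le_one φ) with h | h
        · linarith
        · exfalso
          apply hsφ
          have := Real.sin_sq_add_cos_sq φ
          have h0 : Real.sin φ ^ 2 = 0 := by rw [h] at this; nlinarith
          exact pow_eq_zero_iff (n := 2) (by norm_num) |>.1 h0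
      set b := Real.sqrt (1 - Real.cos φ) with hbdef
      have hb : 0 < b := Real.sqrt_pos.2 ht
      set K := 4 * Real.sqrt 2 * Real.exp 1 with hKdef
      have hK0 : 0 ≤ K := by positivity
      rw [hsplit, lintegral_union measurableSet_Ioi Set.Ioc_disjoint_Ioi_same]
      have hsmall : (∫⁻ s in Set.Ioc (0:ℝ) 1,
          ENNReal.ofReal (|Real.sin φ * Real.cosh (α * s)| /
            (Real.cosh s - Real.cos φ))) ≤ ENNReal.ofReal K := by
        have hmeasg : Measurable fun s : ℝ => ENNReal.ofReal (K * (b / (s + b) ^ 2)) := by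
          apply Measurable.ennreal_ofReal
          apply Measurable.const_mul
          exact (measurable_const.div (((measurable_id.add_const b).pow_const 2)))
        have hmono : ∀ s ∈ Set.Ioc (0:ℝ) 1,
            ENNReal.ofReal (|Real.sin φ * Real.cosh (α * s)| /
              (Real.cosh s - Real.cos φ)) ≤ ENNReal.ofReal (K * (b / (s + b) ^ 2)) := by
          intro s hs
          obtain ⟨hs0, hs1⟩ := hs
          exact ENNReal.ofReal_le_ofReal (point2_small ha1.le hs0 hs1)
        calc (∫⁻ s in Set.Ioc (0:ℝ) 1,
              ENNReal.ofReal (|Real.sin φ * Real.cosh (α * s)| /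
                (Real.cosh s - Real.cos φ)))
            ≤ ∫⁻ s in Set.Ioc (0:ℝ) 1, ENNReal.ofReal (K * (b / (s + b) ^ 2)) :=
              setLIntegral_mono hmeasg hmono
          _ ≤ ∫⁻ s in Set.Ioi (0:ℝ), ENNReal.ofReal (K * (b / (s + b) ^ 2)) :=
              lintegral_mono_set Set.Ioc_subset_Ioi_self
          _ = ∫⁻ s in Set.Ioi (0:ℝ), ENNReal.ofReal K * ENNReal.ofReal (b / (s + b) ^ 2) := by
              apply lintegral_congr
              intro s
              rw [ENNReal.ofReal_mul hK0]
          _ = ENNReal.ofReal K * ∫⁻ s in Set.Ioi (0:ℝ), ENNReal.ofReal (b / (s + b) ^ 2) :=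
              lintegral_const_mul' _ _ ENNReal.ofReal_ne_top
          _ ≤ ENNReal.ofReal K * ENNReal.ofReal 1 :=
              mul_le_mul_right (peak_bound hb) _
          _ = ENNReal.ofReal K := by rw [ENNReal.ofReal_one, mul_one]
      calc _ ≤ ENNReal.ofReal K + ENNReal.ofReal (8 / β) :=
            add_le_add hsmall htailint2
        _ = ENNReal.ofReal (K + 8 / β) := (ENNReal.ofReal_add hK0 hβnn).symm
        _ ≤ ENNReal.ofReal (9 * Real.exp 1 + 8 / β) := by
            apply ENNReal.ofReal_le_ofReal
            have hs2 : Real.sqrt 2 ≤ 2 := by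
              nlinarith [Real.sq_sqrt (by norm_num : (0:ℝ) ≤ 2), Real.sqrt_nonneg 2]
            simp only [hKdef]
            nlinarith
end

section
/- Let d_G(r₁,r₂;θ) = √(r₁² + r₂² − 2 r₁ r₂ cos θ). There exist ε₀ ∈ (0, π/2) and c > 0 such that for all r₁, r₂ > 0 with 1/4 ≤ r₁ + r₂ ≤ 2 and all θ with |θ − π| ≤ ε₀, the second derivative in θ satisfies |∂²_θ d_G(r₁,r₂;θ)| ≥ c r₁ r₂. -/
open Real

theorem stmt19 :
    ∃ ε₀ : ℝ, ε₀ ∈ Set.Ioo 0 (Real.pi / 2) ∧ ∃ c : ℝ, 0 < c ∧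
      ∀ r₁ r₂ θ : ℝ, 0 < r₁ → 0 < r₂ → 1 / 4 ≤ r₁ + r₂ → r₁ + r₂ ≤ 2 →
        |θ - Real.pi| ≤ ε₀ →
        c * (r₁ * r₂) ≤
          |deriv (fun t =>
              deriv (fun u => Real.sqrt (r₁ ^ 2 + r₂ ^ 2 - 2 * r₁ * r₂ * Real.cos u)) t) θ| := by
  refine ⟨Real.pi / 3, ⟨by positivity, by linarith [Real.pi_pos]⟩, 1/4, by norm_num, ?_⟩
  intro r₁ r₂ θ hr₁ hr₂ hsum₁ hsum₂ hθ
  set B := 2 * r₁ * r₂ with hB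
  have hBpos : 0 < B := by positivity
  -- cos θ ≤ -1/2
  have hcos : Real.cos θ ≤ -(1/2) := by
    have h1 : Real.cos (θ - Real.pi) = -Real.cos θ := by
      rw [Real.cos_sub]; simp
    have h2 : Real.cos (π/3) ≤ Real.cos |θ - Real.pi| := by
      apply Real.cos_le_cos_of_nonneg_of_le_pi (abs_nonneg _) (by linarith [Real.pi_pos]) hθ
    rw [Real.cos_abs, h1, Real.cos_pi_div_three] at h2
    linarith
  have hcosneg : Real.cos θ < 0 := by linarith
  -- positivity of inner expression on {cos < 0}
  have hApos : 0 < r₁^2 + r₂^2 := by positivity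
  have hpos : ∀ u : ℝ, Real.cos u < 0 → 0 < r₁ ^ 2 + r₂ ^ 2 - 2 * r₁ * r₂ * Real.cos u := by
    intro u hu; nlinarith
  -- derivative of f on {cos < 0}
  have hderiv : ∀ u : ℝ, Real.cos u < 0 →
      HasDerivAt (fun u => Real.sqrt (r₁ ^ 2 + r₂ ^ 2 - 2 * r₁ * r₂ * Real.cos u))
        (1 / (2 * Real.sqrt (r₁ ^ 2 + r₂ ^ 2 - 2 * r₁ * r₂ * Real.cos u)) * (2 * r₁ * r₂ * Real.sin u)) u := by
    intro u hu
    have hφ : HasDerivAt (fun u => r₁ ^ 2 + r₂ ^ 2 - 2 * r₁ * r₂ * Real.cos u)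
        (2 * r₁ * r₂ * Real.sin u) u := by
      simpa using ((Real.hasDerivAt_cos u).const_mul (2*r₁*r₂)).const_sub (r₁^2+r₂^2)
    exact (Real.hasDerivAt_sqrt (ne_of_gt (hpos u hu))).comp u hφ
  have hopen : IsOpen {u : ℝ | Real.cos u < 0} := isOpen_lt Real.continuous_cos continuous_const
  have hmem : {u : ℝ | Real.cos u < 0} ∈ nhds θ := hopen.mem_nhds hcosneg
  have heq : (fun t => deriv (fun u => Real.sqrt (r₁ ^ 2 + r₂ ^ 2 - 2 * r₁ * r₂ * Real.cos u)) t)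
      =ᶠ[nhds θ] (fun t => 1 / (2 * Real.sqrt (r₁ ^ 2 + r₂ ^ 2 - 2 * r₁ * r₂ * Real.cos t)) * (2 * r₁ * r₂ * Real.sin t)) :=
    Filter.eventuallyEq_of_mem hmem (fun u hu => (hderiv u hu).deriv)
  rw [heq.deriv_eq]
  -- now compute the derivative of g at θ
  set s := Real.sqrt (r₁ ^ 2 + r₂ ^ 2 - 2 * r₁ * r₂ * Real.cos θ) with hs
  have hspos : 0 < s := Real.sqrt_pos.mpr (hpos θ hcosneg)
  have hs2 : s ^ 2 = r₁ ^ 2 + r₂ ^ 2 - 2 * r₁ * r₂ * Real.cos θ :=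
    Real.sq_sqrt (le_of_lt (hpos θ hcosneg))
  have hsle : s ≤ 2 := by
    have : s ^ 2 ≤ 4 := by nlinarith [Real.neg_one_le_cos θ]
    nlinarith
  have hsqrtderiv : HasDerivAt (fun t => Real.sqrt (r₁ ^ 2 + r₂ ^ 2 - 2 * r₁ * r₂ * Real.cos t))
      (1 / (2 * s) * (2 * r₁ * r₂ * Real.sin θ)) θ := hderiv θ hcosneg
  have hden : HasDerivAt (fun t => 2 * Real.sqrt (r₁ ^ 2 + r₂ ^ 2 - 2 * r₁ * r₂ * Real.cos t))
      (2 * (1 / (2 * s) * (2 * r₁ * r₂ * Real.sin θ))) θ := hsqrtderiv.const_mul 2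
  have hinv : HasDerivAt (fun t => (2 * Real.sqrt (r₁ ^ 2 + r₂ ^ 2 - 2 * r₁ * r₂ * Real.cos t))⁻¹)
      (-(2 * (1 / (2 * s) * (2 * r₁ * r₂ * Real.sin θ))) / (2 * s) ^ 2) θ :=
    hden.inv (by positivity)
  have hsin : HasDerivAt (fun t => 2 * r₁ * r₂ * Real.sin t) (2 * r₁ * r₂ * Real.cos θ) θ :=
    (Real.hasDerivAt_sin θ).const_mul (2 * r₁ * r₂)
  have hg : HasDerivAt (fun t => 1 / (2 * Real.sqrt (r₁ ^ 2 + r₂ ^ 2 - 2 * r₁ * r₂ * Real.cos t)) * (2 * r₁ * r₂ * Real.sin t))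
      (-(2 * (1 / (2 * s) * (2 * r₁ * r₂ * Real.sin θ))) / (2 * s) ^ 2 * (2 * r₁ * r₂ * Real.sin θ)
        + (2 * s)⁻¹ * (2 * r₁ * r₂ * Real.cos θ)) θ := by
    have h := hinv.mul hsin
    simp only [one_div] at h ⊢
    exact h
  rw [hg.deriv]
  -- bound
  set D := -(2 * (1 / (2 * s) * (2 * r₁ * r₂ * Real.sin θ))) / (2 * s) ^ 2 * (2 * r₁ * r₂ * Real.sin θ)
        + (2 * s)⁻¹ * (2 * r₁ * r₂ * Real.cos θ) with hD
  have hDval : D = -((2*r₁*r₂)^2 * Real.sin θ ^ 2) / (4 * s^3) + (2*r₁*r₂) * Real.cos θ / (2 * s) := by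
    rw [hD]; field_simp; ring
  have hterm1 : -((2*r₁*r₂)^2 * Real.sin θ ^ 2) / (4 * s^3) ≤ 0 := by
    apply div_nonpos_of_nonpos_of_nonneg
    · nlinarith [sq_nonneg (Real.sin θ), sq_nonneg (2*r₁*r₂)]
    · positivity
  have hterm2 : (2*r₁*r₂) * Real.cos θ / (2 * s) ≤ -(r₁ * r₂) / 4 := by
    rw [div_le_div_iff₀ (by positivity) (by norm_num)]
    nlinarith
  have hDle : D ≤ -(r₁ * r₂) / 4 := by rw [hDval]; linarith
  have : (1:ℝ)/4 * (r₁ * r₂) ≤ -D := by linarith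
  calc (1:ℝ)/4 * (r₁ * r₂) ≤ -D := this
    _ ≤ |D| := neg_le_abs D
end
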